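/- Let P ∈ F_2[x_1,…,x_n] be a polynomial of total degree at most d, and let M be the 2^n × 2^n matrix over F_2 with rows and columns indexed by F_2^n whose entries are M_{x,y} = P(x + y). Then rank(M) ≤ 2·C(n, ≤ ⌊d/2⌋). -/

import Mathlib

open Finset MvPolynomial

lemma zmod2_pow_eq {a : ZMod 2} {e : ℕ} (he : e ≠ 0) : a ^ e = a := by
  induction e with
  | zero => simp at he
  | succ m ih =>
    rcases Nat.eq_zero_or_pos m with h | h
    · simp [h]
    · have h2 : ∀ b : ZMod 2, b * b = b := by decide
      rw [pow_succ, ih (by omega), h2]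

lemma card_support_le_sum' {σ : Type*} (μ : σ →₀ ℕ) :
    μ.support.card ≤ μ.sum (fun _ e => e) := by
  rw [Finsupp.sum]
  calc μ.support.card = ∑ _i ∈ μ.support, 1 := by simp
  _ ≤ ∑ i ∈ μ.support, μ i :=
    Finset.sum_le_sum fun i hi =>
      Nat.one_le_iff_ne_zero.mpr (Finsupp.mem_support_iff.mp hi)

lemma card_small (n k : ℕ) :
    Fintype.card {T : Finset (Fin n) // T.card ≤ k} = ∑ i ∈ Finset.range (k+1), n.choose i := by
  rw [Fintype.card_subtype]
  rw [Finset.card_eq_sum_card_fiberwise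
    (f := Finset.card) (t := Finset.range (k+1))
    (fun T hT => by simp at hT ⊢; omega)]
  refine Finset.sum_congr rfl fun i hi => ?_
  have hik : i ≤ k := by simp at hi; omega
  have : ((univ.filter fun T : Finset (Fin n) => T.card ≤ k).filter
      fun T => T.card = i) = Finset.univ.powersetCard i := by
    rw [← Finset.powerset_univ]
    ext T
    simp [Finset.mem_powersetCard_univ]
    intro h; omega
  rw [this]
  simp [Finset.card_powersetCard]

theorem croot_lev_pach_F2 (n d : ℕ)
    (P : MvPolynomial (Fin n) (ZMod 2)) (hP : P.totalDegree ≤ d)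
    (M : Matrix (Fin n → ZMod 2) (Fin n → ZMod 2) (ZMod 2))
    (hM : ∀ x y, M x y = MvPolynomial.eval (x + y) P) :
    M.rank ≤ 2 * ∑ i ∈ Finset.range (d / 2 + 1), n.choose i := by
  classical
  set k := d / 2 with hk
  set B : Finset (Finset (Fin n)) := univ.filter (fun T => T.card ≤ k) with hB
  have hmemB : ∀ T : Finset (Fin n), T ∈ B ↔ T.card ≤ k := by
    intro T; simp [hB]
  set mon : Finset (Fin n) → (Fin n → ZMod 2) → ZMod 2 :=
    fun S x => ∏ i ∈ S, x i with hmon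
  set A : Matrix (Fin n → ZMod 2)
      ({T : Finset (Fin n) // T.card ≤ k} ⊕ {T : Finset (Fin n) // T.card ≤ k}) (ZMod 2) :=
    fun x i => Sum.rec
      (fun T => mon T.1 x)
      (fun U => ∑ μ ∈ P.support.filter
          (fun μ => U.1 ⊆ μ.support ∧ ¬ (μ.support \ U.1).card ≤ k),
        P.coeff μ * mon (μ.support \ U.1) x) i with hA
  set C : Matrix ({T : Finset (Fin n) // T.card ≤ k} ⊕ {T : Finset (Fin n) // T.card ≤ k})
      (Fin n → ZMod 2) (ZMod 2) :=
    fun i y => Sum.rec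
      (fun T => ∑ μ ∈ P.support.filter (fun μ => T.1 ⊆ μ.support),
        P.coeff μ * mon (μ.support \ T.1) y)
      (fun U => mon U.1 y) i with hC
  -- support monomials have few variables
  have hSd : ∀ μ ∈ P.support, (μ.support).card ≤ d := by
    intro μ hμ
    exact le_trans (card_support_le_sum' μ) (le_trans (MvPolynomial.le_totalDegree hμ) hP)
  have hfact : M = A * C := by
    ext x y
    rw [hM, Matrix.mul_apply, Fintype.sum_sum_type]
    -- convert subtype sums to sums over B
    have hsub : ∀ f : Finset (Fin n) → ZMod 2,
        (∑ T : {T : Finset (Fin n) // T.card ≤ k}, f T.1) = ∑ T ∈ B, f T := by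
      intro f
      exact (Finset.sum_subtype B hmemB f).symm
    have key : MvPolynomial.eval (x + y) P
        = ∑ μ ∈ P.support, P.coeff μ *
            ∑ T ∈ μ.support.powerset, mon T x * mon (μ.support \ T) y := by
      rw [MvPolynomial.eval_eq]
      refine Finset.sum_congr rfl fun μ hμ => ?_
      congr 1
      simp only [hmon]
      rw [← Finset.prod_add]
      refine Finset.prod_congr rfl fun i hi => ?_
      simp only [Pi.add_apply]
      exact zmod2_pow_eq (Finsupp.mem_support_iff.mp hi)
    have hL0 : (∑ T : {T : Finset (Fin n) // T.card ≤ k},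
        mon T.1 x * ∑ μ ∈ P.support.filter (fun μ => T.1 ⊆ μ.support),
          P.coeff μ * mon (μ.support \ T.1) y)
      = ∑ T ∈ B, mon T x * ∑ μ ∈ P.support.filter (fun μ => T ⊆ μ.support),
          P.coeff μ * mon (μ.support \ T) y :=
      hsub (fun T => mon T x * ∑ μ ∈ P.support.filter (fun μ => T ⊆ μ.support),
          P.coeff μ * mon (μ.support \ T) y)
    have hR0 : (∑ U : {T : Finset (Fin n) // T.card ≤ k},
        (∑ μ ∈ P.support.filter
            (fun μ => U.1 ⊆ μ.support ∧ ¬ (μ.support \ U.1).card ≤ k),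
          P.coeff μ * mon (μ.support \ U.1) x) * mon U.1 y)
      = ∑ U ∈ B, (∑ μ ∈ P.support.filter
            (fun μ => U ⊆ μ.support ∧ ¬ (μ.support \ U).card ≤ k),
          P.coeff μ * mon (μ.support \ U) x) * mon U y :=
      hsub (fun U => (∑ μ ∈ P.support.filter
            (fun μ => U ⊆ μ.support ∧ ¬ (μ.support \ U).card ≤ k),
          P.coeff μ * mon (μ.support \ U) x) * mon U y)
    have hLeft :
        (∑ T ∈ B, mon T x * ∑ μ ∈ P.support.filter (fun μ => T ⊆ μ.support),
            P.coeff μ * mon (μ.support \ T) y)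
        = ∑ μ ∈ P.support, P.coeff μ *
            ∑ T ∈ μ.support.powerset.filter (fun T => T.card ≤ k),
              mon T x * mon (μ.support \ T) y := by
      calc (∑ T ∈ B, mon T x * ∑ μ ∈ P.support.filter (fun μ => T ⊆ μ.support),
              P.coeff μ * mon (μ.support \ T) y)
          = ∑ T ∈ B, ∑ μ ∈ P.support,
              if T ⊆ μ.support
              then P.coeff μ * (mon T x * mon (μ.support \ T) y) else 0 := by
            refine Finset.sum_congr rfl fun T _ => ?_
            rw [Finset.mul_sum, Finset.sum_filter]
            exact Finset.sum_congr rfl fun μ _ => by split_ifs <;> ring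
        _ = ∑ μ ∈ P.support, ∑ T ∈ B,
              if T ⊆ μ.support
              then P.coeff μ * (mon T x * mon (μ.support \ T) y) else 0 :=
            Finset.sum_comm
        _ = ∑ μ ∈ P.support, P.coeff μ *
              ∑ T ∈ μ.support.powerset.filter (fun T => T.card ≤ k),
                mon T x * mon (μ.support \ T) y := by
            refine Finset.sum_congr rfl fun μ _ => ?_
            rw [← Finset.sum_filter, Finset.mul_sum]
            have hset : B.filter (fun T => T ⊆ μ.support)
                = μ.support.powerset.filter (fun T => T.card ≤ k) := by
              ext T
              simp only [Finset.mem_filter, Finset.mem_powerset, hmemB]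
              exact and_comm
            rw [hset]
    have hRight :
        (∑ U ∈ B, (∑ μ ∈ P.support.filter
              (fun μ => U ⊆ μ.support ∧ ¬ (μ.support \ U).card ≤ k),
            P.coeff μ * mon (μ.support \ U) x) * mon U y)
        = ∑ μ ∈ P.support, P.coeff μ *
            ∑ T ∈ μ.support.powerset.filter (fun T => ¬ T.card ≤ k),
              mon T x * mon (μ.support \ T) y := by
      calc (∑ U ∈ B, (∑ μ ∈ P.support.filter
              (fun μ => U ⊆ μ.support ∧ ¬ (μ.support \ U).card ≤ k),
            P.coeff μ * mon (μ.support \ U) x) * mon U y)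
          = ∑ U ∈ B, ∑ μ ∈ P.support,
              if U ⊆ μ.support ∧ ¬ (μ.support \ U).card ≤ k
              then P.coeff μ * (mon (μ.support \ U) x * mon U y) else 0 := by
            refine Finset.sum_congr rfl fun U _ => ?_
            rw [Finset.sum_mul, Finset.sum_filter]
            exact Finset.sum_congr rfl fun μ _ => by split_ifs <;> ring
        _ = ∑ μ ∈ P.support, ∑ U ∈ B,
              if U ⊆ μ.support ∧ ¬ (μ.support \ U).card ≤ k
              then P.coeff μ * (mon (μ.support \ U) x * mon U y) else 0 :=
            Finset.sum_comm
        _ = ∑ μ ∈ P.support, P.coeff μ *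
              ∑ U ∈ μ.support.powerset.filter (fun U => ¬ (μ.support \ U).card ≤ k),
                mon (μ.support \ U) x * mon U y := by
            refine Finset.sum_congr rfl fun μ hμ => ?_
            rw [← Finset.sum_filter, Finset.mul_sum]
            have hset : B.filter (fun U => U ⊆ μ.support ∧ ¬ (μ.support \ U).card ≤ k)
                = μ.support.powerset.filter (fun U => ¬ (μ.support \ U).card ≤ k) := by
              ext U
              simp only [Finset.mem_filter, Finset.mem_powerset, hmemB]
              constructor
              · rintro ⟨hUk, hUS, hc⟩; exact ⟨hUS, hc⟩
              · rintro ⟨hUS, hc⟩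
                refine ⟨?_, hUS, hc⟩
                have h1 : (μ.support \ U).card + U.card = μ.support.card :=
                  Finset.card_sdiff_add_card_eq_card hUS
                have h2 := hSd μ hμ
                omega
            rw [hset]
        _ = ∑ μ ∈ P.support, P.coeff μ *
              ∑ T ∈ μ.support.powerset.filter (fun T => ¬ T.card ≤ k),
                mon T x * mon (μ.support \ T) y := by
            refine Finset.sum_congr rfl fun μ hμ => ?_
            congr 1
            refine Finset.sum_nbij' (fun U => μ.support \ U) (fun T => μ.support \ T)
              ?_ ?_ ?_ ?_ ?_
            · intro U hU
              simp only [Finset.mem_filter, Finset.mem_powerset] at hU ⊢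
              exact ⟨Finset.sdiff_subset, hU.2⟩
            · intro T hT
              simp only [Finset.mem_filter, Finset.mem_powerset] at hT ⊢
              rw [Finset.sdiff_sdiff_eq_self hT.1]
              exact ⟨Finset.sdiff_subset, hT.2⟩
            · intro U hU
              simp only [Finset.mem_filter, Finset.mem_powerset] at hU
              exact Finset.sdiff_sdiff_eq_self hU.1
            · intro T hT
              simp only [Finset.mem_filter, Finset.mem_powerset] at hT
              exact Finset.sdiff_sdiff_eq_self hT.1
            · intro U hU
              simp only [Finset.mem_filter, Finset.mem_powerset] at hU
              rw [Finset.sdiff_sdiff_eq_self hU.1]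
    simp only [hA, hC]
    rw [hL0, hR0, hLeft, hRight, key, ← Finset.sum_add_distrib]
    refine Finset.sum_congr rfl fun μ _ => ?_
    rw [← mul_add, Finset.sum_filter_add_sum_filter_not]
  rw [hfact]
  calc (A * C).rank ≤ C.rank := Matrix.rank_mul_le_right A C
    _ ≤ Fintype.card ({T : Finset (Fin n) // T.card ≤ k} ⊕ {T : Finset (Fin n) // T.card ≤ k}) :=
        Matrix.rank_le_card_height C
    _ = 2 * ∑ i ∈ Finset.range (k+1), n.choose i := by
        rw [Fintype.card_sum, card_small]; ring
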